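/- Let G be a nontrivial finite 2-group and let G = Δᵢ Cᵢ be its reduced cyclic decomposition (pairwise distinct cyclic subgroups). Then none of the Cᵢ is the trivial subgroup. -/

import Mathlib

open Finset

lemma zmod2_odd (k : ℕ) : ((2 * k + 1 : ℕ) : ZMod 2) = 1 := by
  push_cast
  rw [show ((2 : ZMod 2)) = 0 by decide]
  ring

lemma zmod2_even (k : ℕ) : ((2 * k : ℕ) : ZMod 2) = 0 := by
  push_cast
  rw [show ((2 : ZMod 2)) = 0 by decide]
  ring

section Aux

variable {G : Type*} [Group G] [Fintype G]

/-- The set of elements with `g ^ 2 = 1` in a group of even order has even cardinality. -/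
lemma even_card_sq_eq_one [DecidableEq G] (h2 : 2 ∣ Fintype.card G) :
    2 ∣ (univ.filter (fun g : G => g ^ 2 = 1)).card := by
  have hp : Fact (Nat.Prime 2) := ⟨Nat.prime_two⟩
  set f : Function.End G := fun g => g⁻¹ with hf
  have hf2 : f ^ 2 ^ 1 = 1 := by
    have : f ^ 2 ^ 1 = f * f := by rw [pow_one, sq]
    rw [this]
    funext g
    show f (f g) = g
    simp [hf]
  have key := Equiv.Perm.card_fixedPoints_modEq (f := f) (p := 2) (n := 1) hf2
  have hcard : Fintype.card f.fixedPoints = (univ.filter (fun g : G => g ^ 2 = 1)).card := by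
    rw [← Set.toFinset_card]
    congr 1
    ext g
    rw [Set.mem_toFinset, Finset.mem_filter]
    simp only [Finset.mem_univ, true_and]
    show g⁻¹ = g ↔ g ^ 2 = 1
    rw [inv_eq_iff_mul_eq_one, pow_two]
  rw [hcard] at key
  unfold Nat.ModEq at key
  omega

/-- The number of involutions in a nontrivial finite 2-group is odd. -/
lemma odd_card_involutions [DecidableEq G] [Nontrivial G] (hG : IsPGroup 2 G) :
    Odd (univ.filter (fun g : G => g ≠ 1 ∧ g ^ 2 = 1)).card := by
  have hp : Fact (Nat.Prime 2) := ⟨Nat.prime_two⟩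
  obtain ⟨n, hn⟩ := IsPGroup.iff_card.mp hG
  rw [Nat.card_eq_fintype_card] at hn
  have hn1 : n ≠ 0 := by
    rintro rfl
    simp only [pow_zero] at hn
    exact (Fintype.one_lt_card).ne' hn
  have h2 : 2 ∣ Fintype.card G := hn ▸ dvd_pow_self 2 hn1
  have heven := even_card_sq_eq_one h2
  have hsplit : (univ.filter (fun g : G => g ≠ 1 ∧ g ^ 2 = 1))
      = (univ.filter (fun g : G => g ^ 2 = 1)).erase 1 := by
    ext g
    simp [and_comm, eq_comm, Ne]
  have h1mem : (1 : G) ∈ univ.filter (fun g : G => g ^ 2 = 1) := by simp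
  have hpos : 0 < (univ.filter (fun g : G => g ^ 2 = 1)).card := Finset.card_pos.mpr ⟨1, h1mem⟩
  obtain ⟨k, hk⟩ := heven
  rw [hsplit, Finset.card_erase_of_mem h1mem, hk]
  rw [hk] at hpos
  exact ⟨k - 1, by omega⟩

/-- A nontrivial cyclic subgroup of a finite 2-group contains exactly one involution. -/
lemma unique_involution (hG : IsPGroup 2 G) (C : Subgroup G) (hC : IsCyclic ↥C)
    (hne : C ≠ ⊥) : ∃! g : G, (g ≠ 1 ∧ g ^ 2 = 1) ∧ g ∈ C := by
  classical
  have hp : Fact (Nat.Prime 2) := ⟨Nat.prime_two⟩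
  have hnt : Nontrivial ↥C := (Subgroup.nontrivial_iff_ne_bot C).mpr hne
  have hCp : IsPGroup 2 ↥C := hG.to_subgroup C
  obtain ⟨n, hn⟩ := IsPGroup.iff_card.mp hCp
  rw [Nat.card_eq_fintype_card] at hn
  have hn1 : n ≠ 0 := by
    rintro rfl
    simp only [pow_zero] at hn
    exact (Fintype.one_lt_card).ne' hn
  have h2 : 2 ∣ Fintype.card ↥C := hn ▸ dvd_pow_self 2 hn1
  obtain ⟨x, hx⟩ := exists_prime_orderOf_dvd_card (G := ↥C) 2 h2
  have hx1 : x ≠ 1 := by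
    intro h
    rw [h, orderOf_one] at hx
    omega
  have hxsq : x ^ 2 = 1 := by rw [← hx]; exact pow_orderOf_eq_one x
  -- uniqueness of involutions in a cyclic group
  have huniq : ∀ y : ↥C, y ≠ 1 → y ^ 2 = 1 → y = x := by
    intro y hy1 hysq
    by_contra hyx
    have hle := IsCyclic.card_pow_eq_one_le (α := ↥C) (n := 2) (by norm_num)
    have hsub : ({1, x, y} : Finset ↥C) ⊆ univ.filter (fun a => a ^ 2 = 1) := by
      intro a ha
      simp only [Finset.mem_insert, Finset.mem_singleton] at ha
      rcases ha with rfl | rfl | rfl <;> simp [hxsq, hysq]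
    have hcard3 : ({1, x, y} : Finset ↥C).card = 3 := by
      rw [Finset.card_insert_of_notMem (by
          simp only [Finset.mem_insert, Finset.mem_singleton]
          push_neg
          exact ⟨Ne.symm hx1, Ne.symm hy1⟩),
        Finset.card_insert_of_notMem (by
          simp only [Finset.mem_singleton]
          exact Ne.symm hyx)]
      simp
    have := Finset.card_le_card hsub
    omega
  refine ⟨(x : G), ⟨⟨?_, ?_⟩, x.2⟩, ?_⟩
  · intro h
    apply hx1
    ext
    simpa using h
  · have := congrArg (Subtype.val) hxsq
    push_cast at this
    exact this
  · rintro g ⟨⟨hg1, hgsq⟩, hgC⟩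
    have : (⟨g, hgC⟩ : ↥C) = x := by
      apply huniq
      · intro h
        apply hg1
        simpa using congrArg Subtype.val h
      · rw [Subtype.ext_iff]
        push_cast
        exact hgsq
    exact congrArg Subtype.val this

end Aux

/-- In the reduced cyclic decomposition of a nontrivial finite 2-group, none of the cyclic
subgroups is trivial. -/
theorem reduced_decomposition_no_trivial_subgroup (G : Type*) [Group G] [Fintype G]
    [Nontrivial G] (hG : IsPGroup 2 G) (S : Finset (Subgroup G))
    (hcyc : ∀ C ∈ S, IsCyclic ↥C)
    (hdec : ∀ g : G, Odd (Nat.card {C : Subgroup G // C ∈ S ∧ g ∈ C})) :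
    ⊥ ∉ S := by
  classical
  intro hbot
  -- translate `hdec` into a statement about finset filters
  have hodd : ∀ g : G, Odd (S.filter (fun C => g ∈ C)).card := by
    intro g
    have e : {C : Subgroup G // C ∈ S ∧ g ∈ C} ≃ {C : Subgroup G // C ∈ S.filter (fun C => g ∈ C)} :=
      Equiv.subtypeEquivRight (by intro C; simp)
    have := hdec g
    rwa [Nat.card_congr e, Nat.card_eq_fintype_card, Fintype.card_coe] at this
  -- |S| is odd (apply at g = 1)
  have hScard : Odd S.card := by
    have := hodd 1
    rwa [Finset.filter_true_of_mem (fun C _ => C.one_mem)] at this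
  -- the set of involutions
  set I : Finset G := univ.filter (fun g : G => g ≠ 1 ∧ g ^ 2 = 1) with hI
  have hIodd : Odd I.card := odd_card_involutions hG
  -- double count in ZMod 2
  have key : (∑ C ∈ S, ∑ g ∈ I, (if g ∈ C then 1 else 0 : ZMod 2))
      = ∑ g ∈ I, ∑ C ∈ S, (if g ∈ C then 1 else 0 : ZMod 2) := Finset.sum_comm
  -- right side: each row sums to 1 (odd number of subgroups contain g), |I| odd, total = 1
  have hrow : ∀ g ∈ I, (∑ C ∈ S, (if g ∈ C then 1 else 0 : ZMod 2)) = 1 := by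
    intro g _
    rw [Finset.sum_boole]
    obtain ⟨k, hk⟩ := hodd g
    rw [hk, zmod2_odd]
  have hRHS : (∑ g ∈ I, ∑ C ∈ S, (if g ∈ C then 1 else 0 : ZMod 2)) = 1 := by
    rw [Finset.sum_congr rfl hrow, Finset.sum_const]
    obtain ⟨k, hk⟩ := hIodd
    rw [hk, Nat.smul_one_eq_cast, zmod2_odd]
  -- left side: columns indexed by nontrivial C sum to 1, the ⊥ column sums to 0
  have hcol : ∀ C ∈ S, (∑ g ∈ I, (if g ∈ C then 1 else 0 : ZMod 2))
      = if C = ⊥ then 0 else 1 := by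
    intro C hC
    rw [Finset.sum_boole]
    by_cases hCb : C = ⊥
    · subst hCb
      rw [if_pos rfl]
      have hzero : I.filter (fun g => g ∈ (⊥ : Subgroup G)) = ∅ := by
        rw [Finset.filter_eq_empty_iff]
        intro g hg
        rw [hI, Finset.mem_filter] at hg
        rw [Subgroup.mem_bot]
        exact hg.2.1
      rw [hzero]
      simp
    · obtain ⟨x, hx, hxu⟩ := unique_involution hG C (hcyc C hC) hCb
      have : I.filter (fun g => g ∈ C) = {x} := by
        ext g
        simp only [Finset.mem_filter, Finset.mem_singleton, hI, Finset.mem_univ, true_and]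
        constructor
        · rintro ⟨h1, h2⟩; exact hxu g ⟨h1, h2⟩
        · rintro rfl; exact ⟨hx.1, hx.2⟩
      simp [this, hCb]
  have hLHS : (∑ C ∈ S, ∑ g ∈ I, (if g ∈ C then 1 else 0 : ZMod 2)) = 0 := by
    rw [Finset.sum_congr rfl hcol, ← Finset.add_sum_erase S _ hbot, if_pos rfl, zero_add]
    have hone : ∀ C ∈ S.erase ⊥, (if C = (⊥ : Subgroup G) then (0 : ZMod 2) else 1) = 1 := by
      intro C hC
      rw [if_neg (Finset.ne_of_mem_erase hC)]
    rw [Finset.sum_congr rfl hone, Finset.sum_const]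
    obtain ⟨k, hk⟩ := hScard
    have : (S.erase ⊥).card = 2 * k := by
      rw [Finset.card_erase_of_mem hbot, hk]
      omega
    rw [this, Nat.smul_one_eq_cast, zmod2_even]
  rw [hLHS, hRHS] at key
  exact one_ne_zero key.symm
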